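/- Let W be a real m × n matrix, b ∈ ℝᵐ, q̄ ∈ ℝⁿ, and r > 0. Suppose q ∈ ℝⁿ and Ψ ∈ ℝᵐ satisfy the decoupled position-correction equations of the Gear-Gupta-Leimkuhler timestepping scheme: q = q̄ + Wᵀ Ψ, and Ψᵢ = max(Ψᵢ − r·(W q + b)ᵢ, 0) for every i ∈ {1, …, m}. Then q is the Euclidean projection of q̄ onto the polyhedron S = {x ∈ ℝⁿ : (W x + b)ᵢ ≥ 0 for all i}; that is, q ∈ S and ‖q − q̄‖ ≤ ‖x − q̄‖ for every x ∈ S. -/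

import Mathlib

/-- If `q = q̄ + Wᵀ Ψ` and `Ψᵢ = max (Ψᵢ - r * (W q + b)ᵢ) 0` for all `i`
(the decoupled GGL position-correction equations), then `q` is the Euclidean
projection of `q̄` onto the polyhedron `S = {x | W x + b ≥ 0}`: it lies in `S`
and minimizes the Euclidean distance to `q̄` among all points of `S`. -/
theorem ggl_position_correction_is_projection (m n : ℕ)
    (W : Matrix (Fin m) (Fin n) ℝ) (b : Fin m → ℝ)
    (qbar q : EuclideanSpace ℝ (Fin n)) (Ψ : Fin m → ℝ) (r : ℝ) (hr : 0 < r)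
    (hq : q = qbar + (WithLp.equiv 2 (Fin n → ℝ)).symm
        (W.transpose.mulVec Ψ))
    (hΨ : ∀ i, Ψ i =
        max (Ψ i - r * (W.mulVec (WithLp.equiv 2 (Fin n → ℝ) q) + b) i) 0) :
    (∀ i, 0 ≤ (W.mulVec (WithLp.equiv 2 (Fin n → ℝ) q) + b) i) ∧
      ∀ x : EuclideanSpace ℝ (Fin n),
        (∀ i, 0 ≤ (W.mulVec (WithLp.equiv 2 (Fin n → ℝ) x) + b) i) →
          ‖q - qbar‖ ≤ ‖x - qbar‖ := by
  set g : Fin m → ℝ := W.mulVec (WithLp.equiv 2 (Fin n → ℝ) q) + b with hg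
  -- Ψ is nonnegative
  have hΨ0 : ∀ i, 0 ≤ Ψ i := fun i => (hΨ i).ge.trans' (le_max_right _ _)
  -- feasibility
  have hfeas : ∀ i, 0 ≤ g i := by
    intro i
    by_contra h
    push_neg at h
    have h1 : Ψ i - r * g i > Ψ i := by nlinarith
    have h2 : Ψ i ≥ Ψ i - r * g i := (hΨ i).ge.trans' (le_max_left _ _)
    linarith
  -- complementarity
  have hcomp : ∀ i, Ψ i * g i = 0 := by
    intro i
    rcases eq_or_lt_of_le (hfeas i) with h | h
    · rw [← h, mul_zero]
    rcases eq_or_lt_of_le (hΨ0 i) with h' | h'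
    · rw [← h', zero_mul]
    · exfalso
      have h1 : Ψ i - r * g i < Ψ i := by nlinarith
      have : max (Ψ i - r * g i) 0 < Ψ i := max_lt h1 h'
      rw [← hΨ i] at this
      exact lt_irrefl _ this
  refine ⟨hfeas, fun x hx => ?_⟩
  -- key inner product inequality
  have hdiff : q - qbar = (WithLp.equiv 2 (Fin n → ℝ)).symm (W.transpose.mulVec Ψ) := by
    rw [hq]; abel
  have hinner : 0 ≤ (inner ℝ (x - q) (q - qbar) : ℝ) := by
    rw [hdiff]
    have : (inner ℝ (x - q) ((WithLp.equiv 2 (Fin n → ℝ)).symm (W.transpose.mulVec Ψ)) : ℝ)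
        = dotProduct (WithLp.equiv 2 (Fin n → ℝ) (x - q)) (W.transpose.mulVec Ψ) := by
      rw [PiLp.inner_apply]
      simp [dotProduct, RCLike.inner_apply, mul_comm]
    rw [this, Matrix.mulVec_transpose, dotProduct_comm, ← Matrix.dotProduct_mulVec]
    have hWxq : W.mulVec (WithLp.equiv 2 (Fin n → ℝ) (x - q))
        = W.mulVec (WithLp.equiv 2 (Fin n → ℝ) x) - W.mulVec (WithLp.equiv 2 (Fin n → ℝ) q) := by
      rw [← Matrix.mulVec_sub]
      congr 1
    rw [hWxq]
    have : dotProduct Ψ (W.mulVec (WithLp.equiv 2 (Fin n → ℝ) x)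
        - W.mulVec (WithLp.equiv 2 (Fin n → ℝ) q))
        = ∑ i, Ψ i * ((W.mulVec (WithLp.equiv 2 (Fin n → ℝ) x) + b) i - g i) := by
      simp [dotProduct, hg]
    rw [this]
    apply Finset.sum_nonneg
    intro i _
    have := hcomp i
    have := hx i
    have := hΨ0 i
    nlinarith
  -- conclude via norms
  have key : ‖q - qbar‖ ^ 2 ≤ ‖x - qbar‖ ^ 2 := by
    have hxq : x - qbar = (x - q) + (q - qbar) := by abel
    rw [hxq, norm_add_sq_real]
    have : 0 ≤ ‖x - q‖ ^ 2 := sq_nonneg _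
    nlinarith
  nlinarith [norm_nonneg (x - qbar), norm_nonneg (q - qbar), key]
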